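/- Monotonicity of SAA bounds in sample size: E[v_{N+1}] ≤ E[v_N] for a maximization problem, i.e., the expected SAA optimal value is nonincreasing in the number of samples N and thus the statistical upper bound improves monotonically. -/

import Mathlib

open Finset

/-- Monotonicity of the SAA statistical upper bound in the sample size:
`E[v_{N+1}] ≤ E[v_N]` for a maximization problem, where
`v_N = max_{x∈X} (1/N) ∑_{i=1}^N φ(x, ω^i)` for i.i.d. samples from
a finite scenario set. -/
theorem saa_bound_monotone {X Ω : Type*} [Fintype X] [Nonempty X] [Fintype Ω]
    (p : Ω → ℝ) (hp : ∀ ω, 0 ≤ p ω) (hpsum : ∑ ω, p ω = 1)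
    (φ : X → Ω → ℝ) (N : ℕ) (hN : 0 < N) :
    (∑ s : Fin (N + 1) → Ω, (∏ i, p (s i)) *
        (⨆ x : X, (1 / ((N : ℝ) + 1)) * ∑ i, φ x (s i))) ≤
      ∑ s : Fin N → Ω, (∏ i, p (s i)) *
        (⨆ x : X, (1 / (N : ℝ)) * ∑ i, φ x (s i)) := by
  have hbdd : ∀ (f : X → ℝ), BddAbove (Set.range f) := fun f => (Set.finite_range f).bddAbove
  have hNe : (N:ℝ) ≠ 0 := Nat.cast_ne_zero.mpr hN.ne'
  have hN1e : ((N:ℝ) + 1) ≠ 0 := by positivity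
  have hN1 : (0:ℝ) < 1 / ((N:ℝ) + 1) := by positivity
  -- pointwise leave-one-out bound
  have step1 : ∀ s : Fin (N+1) → Ω,
      (⨆ x : X, (1/((N:ℝ)+1)) * ∑ i, φ x (s i)) ≤
      (1/((N:ℝ)+1)) * ∑ j : Fin (N+1),
        ⨆ x : X, (1/(N:ℝ)) * ∑ i : Fin N, φ x (s (j.succAbove i)) := by
    intro s
    apply ciSup_le
    intro x
    have h1 : ∀ j : Fin (N+1), ∑ i : Fin N, φ x (s (j.succAbove i))
        = (∑ i, φ x (s i)) - φ x (s j) := by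
      intro j
      have := Fin.sum_univ_succAbove (fun i => φ x (s i)) j
      linarith
    have key : (1/((N:ℝ)+1)) * ∑ i, φ x (s i)
        = (1/((N:ℝ)+1)) * ∑ j : Fin (N+1),
            (1/(N:ℝ)) * ∑ i : Fin N, φ x (s (j.succAbove i)) := by
      simp_rw [h1]
      rw [← Finset.mul_sum, Finset.sum_sub_distrib, Finset.sum_const, Finset.card_univ,
        Fintype.card_fin, nsmul_eq_mul]
      push_cast
      field_simp
      ring
    rw [key]
    gcongr with j
    exact le_ciSup (hbdd fun x => (1/(N:ℝ)) * ∑ i : Fin N, φ x (s (j.succAbove i))) x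
  have wnonneg : ∀ s : Fin (N+1) → Ω, (0:ℝ) ≤ ∏ i, p (s i) :=
    fun s => Finset.prod_nonneg fun i _ => hp _
  calc (∑ s : Fin (N + 1) → Ω, (∏ i, p (s i)) *
        (⨆ x : X, (1 / ((N : ℝ) + 1)) * ∑ i, φ x (s i)))
      ≤ ∑ s : Fin (N + 1) → Ω, (∏ i, p (s i)) *
          ((1/((N:ℝ)+1)) * ∑ j : Fin (N+1),
            ⨆ x : X, (1/(N:ℝ)) * ∑ i : Fin N, φ x (s (j.succAbove i))) := by
        apply Finset.sum_le_sum
        intro s _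
        exact mul_le_mul_of_nonneg_left (step1 s) (wnonneg s)
    _ = ∑ j : Fin (N+1), (1/((N:ℝ)+1)) * ∑ s : Fin (N + 1) → Ω, (∏ i, p (s i)) *
          (⨆ x : X, (1/(N:ℝ)) * ∑ i : Fin N, φ x (s (j.succAbove i))) := by
        simp_rw [Finset.mul_sum]
        rw [Finset.sum_comm]
        exact Finset.sum_congr rfl fun j _ => Finset.sum_congr rfl fun s _ => by ring
    _ = ∑ j : Fin (N+1), (1/((N:ℝ)+1)) *
          ∑ t : Fin N → Ω, (∏ i, p (t i)) *
            (⨆ x : X, (1/(N:ℝ)) * ∑ i : Fin N, φ x (t i)) := by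
        apply Finset.sum_congr rfl
        intro j _
        congr 1
        rw [← (Fin.insertNthEquiv (fun _ => Ω) j).sum_comp
          (fun s => (∏ i, p (s i)) *
            (⨆ x : X, (1/(N:ℝ)) * ∑ i : Fin N, φ x (s (j.succAbove i))))]
        rw [Fintype.sum_prod_type]
        have key2 : ∀ (ω : Ω) (t : Fin N → Ω),
            (∏ i, p ((Fin.insertNthEquiv (fun _ => Ω) j) (ω, t) i)) *
              (⨆ x : X, (1/(N:ℝ)) * ∑ i : Fin N,
                φ x ((Fin.insertNthEquiv (fun _ => Ω) j) (ω, t) (j.succAbove i)))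
            = p ω * ((∏ i, p (t i)) *
              (⨆ x : X, (1/(N:ℝ)) * ∑ i : Fin N, φ x (t i))) := by
          intro ω t
          have hs : ∀ i : Fin N,
              (Fin.insertNthEquiv (fun _ => Ω) j) (ω, t) (j.succAbove i) = t i := by
            intro i
            simp [Fin.insertNthEquiv]
          have hprod : (∏ i, p ((Fin.insertNthEquiv (fun _ => Ω) j) (ω, t) i))
              = p ω * ∏ i, p (t i) := by
            rw [Fin.prod_univ_succAbove
              (fun i => p ((Fin.insertNthEquiv (fun _ => Ω) j) (ω, t) i)) j]
            simp [hs, Fin.insertNthEquiv]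
          rw [hprod]
          simp_rw [hs]
          ring
        simp_rw [key2, ← Finset.mul_sum]
        rw [← Finset.sum_mul, hpsum, one_mul]
    _ = ∑ t : Fin N → Ω, (∏ i, p (t i)) *
          (⨆ x : X, (1/(N:ℝ)) * ∑ i : Fin N, φ x (t i)) := by
        rw [Finset.sum_const, Finset.card_univ, Fintype.card_fin, nsmul_eq_mul]
        push_cast
        field_simp
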